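/- (Invertibility of the implicit score-driven (ISD) filter, Theorem 1.) Let P ∈ ℝ^{k×k} be symmetric positive definite, α ∈ ℝ with λ_min(P) > α⁻, ω ∈ ℝ^k, Φ ∈ ℝ^{k×k}, and set γ := λ_min(P − ΦᵀPΦ). For each t ≥ 1 let ℓ_t : ℝ^k → ℝ be twice continuously differentiable with α·I ⪯ −∇²ℓ_t(θ) for all θ ∈ ℝ^k. Suppose two sequences (θ_{t|t})_{t≥0} and (θ̃_{t|t})_{t≥0} in ℝ^k satisfy, for every t ≥ 1, the prediction step θ_{t|t−1} = (I − Φ)ω + Φ θ_{t−1|t−1} and the implicit update (first-order condition) θ_{t|t} = θ_{t|t−1} + P⁻¹∇ℓ_t(θ_{t|t}), and likewise for (θ̃_{t|t}) with the same functions ℓ_t but a possibly different starting point θ̃_{0|0}. Then for all t ≥ 0, ‖θ_{t|t} − θ̃_{t|t}‖²_P ≤ τ_im^t · ‖θ_{0|0} − θ̃_{0|0}‖²_P, where τ_im := (1 − γ⁺/λ_max(P) + γ⁻/λ_min(P)) · (1 − α⁺/(λ_max(P) + α⁺) + α⁻/(λ_min(P) − α⁻))². In particular, if τ_im < 1 then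 ‖θ_{t|t} − θ̃_{t|t}‖ → 0 as t → ∞ (exponentially fast) for any starting points. -/

import Mathlib

open Matrix

/-- Smallest eigenvalue of a (Hermitian) real matrix; junk value 0 otherwise. -/
noncomputable def lMin {k : ℕ} (A : Matrix (Fin k) (Fin k) ℝ) : ℝ :=
  letI := Classical.propDecidable A.IsHermitian
  if h : A.IsHermitian then ⨅ i, h.eigenvalues i else 0

/-- Largest eigenvalue of a (Hermitian) real matrix; junk value 0 otherwise. -/
noncomputable def lMax {k : ℕ} (A : Matrix (Fin k) (Fin k) ℝ) : ℝ :=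
  letI := Classical.propDecidable A.IsHermitian
  if h : A.IsHermitian then ⨆ i, h.eigenvalues i else 0

/-- P-weighted squared vector norm `‖x‖_P² = xᵀ P x`. -/
def wq {k : ℕ} (P : Matrix (Fin k) (Fin k) ℝ) (x : Fin k → ℝ) : ℝ := x ⬝ᵥ P *ᵥ x

/-- Induced P-weighted matrix norm `‖A‖_P = sup_{x ≠ 0} ‖Ax‖_P / ‖x‖_P`. -/
noncomputable def wMatNorm {k : ℕ} (P A : Matrix (Fin k) (Fin k) ℝ) : ℝ :=
  sSup {r : ℝ | ∃ x : Fin k → ℝ, x ≠ 0 ∧ r = Real.sqrt (wq P (A *ᵥ x)) / Real.sqrt (wq P x)}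


lemma my_rep {k : ℕ} {A : Matrix (Fin k) (Fin k) ℝ} (hA : A.IsHermitian) (x : Fin k → ℝ) :
    ∃ y : Fin k → ℝ, x ⬝ᵥ A *ᵥ x = ∑ i, hA.eigenvalues i * (y i)^2 ∧ x ⬝ᵥ x = ∑ i, (y i)^2 := by
  classical
  set U : Matrix (Fin k) (Fin k) ℝ := (hA.eigenvectorUnitary : Matrix (Fin k) (Fin k) ℝ) with hU
  have hUTs : star U = Uᵀ := conjTranspose_eq_transpose_of_trivial U ▸ (Matrix.star_eq_conjTranspose U)
  have hUU : U * star U = 1 := (Matrix.mem_unitaryGroup_iff).mp hA.eigenvectorUnitary.2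
  refine ⟨star U *ᵥ x, ?_, ?_⟩
  · conv_lhs => rw [hA.spectral_theorem, Unitary.conjStarAlgAut_apply, ← hU]
    rw [← Matrix.mulVec_mulVec, ← Matrix.mulVec_mulVec, Matrix.dotProduct_mulVec]
    have : x ᵥ* U = star U *ᵥ x := by rw [hUTs, ← Matrix.vecMul_transpose, Matrix.transpose_transpose]
    rw [this]
    simp [Matrix.mulVec_diagonal, dotProduct, Function.comp]
    exact Finset.sum_congr rfl fun i _ => by ring
  · conv_lhs => rw [show x ⬝ᵥ x = x ⬝ᵥ ((U * star U) *ᵥ x) by rw [hUU, Matrix.one_mulVec]]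
    rw [← Matrix.mulVec_mulVec, Matrix.dotProduct_mulVec]
    have : x ᵥ* U = star U *ᵥ x := by rw [hUTs, ← Matrix.vecMul_transpose, Matrix.transpose_transpose]
    rw [this]
    simp [dotProduct]
    ring_nf

lemma lMin_le_wq {k : ℕ} {A : Matrix (Fin k) (Fin k) ℝ} (hA : A.IsHermitian) (x : Fin k → ℝ) :
    lMin A * (x ⬝ᵥ x) ≤ x ⬝ᵥ A *ᵥ x := by
  obtain ⟨y, h1, h2⟩ := my_rep hA x
  rw [h1, h2, Finset.mul_sum]
  refine Finset.sum_le_sum fun i _ => ?_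
  have h : lMin A ≤ hA.eigenvalues i := by
    rw [lMin, dif_pos hA]
    exact ciInf_le (Finite.bddBelow_range _) i
  nlinarith [sq_nonneg (y i)]

lemma wq_le_lMax {k : ℕ} {A : Matrix (Fin k) (Fin k) ℝ} (hA : A.IsHermitian) (x : Fin k → ℝ) :
    x ⬝ᵥ A *ᵥ x ≤ lMax A * (x ⬝ᵥ x) := by
  obtain ⟨y, h1, h2⟩ := my_rep hA x
  rw [h1, h2, Finset.mul_sum]
  refine Finset.sum_le_sum fun i _ => ?_
  have h : hA.eigenvalues i ≤ lMax A := by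
    rw [lMax, dif_pos hA]
    exact le_ciSup (Finite.bddAbove_range _) i
  nlinarith [sq_nonneg (y i)]

lemma lMin_le_lMax {k : ℕ} [Nonempty (Fin k)] {A : Matrix (Fin k) (Fin k) ℝ}
    (hA : A.IsHermitian) : lMin A ≤ lMax A := by
  rw [lMin, lMax, dif_pos hA, dif_pos hA]
  exact le_trans (ciInf_le (Finite.bddBelow_range _) (Classical.arbitrary _))
    (le_ciSup (Finite.bddAbove_range _) (Classical.arbitrary _))

lemma my_cs {k : ℕ} {P : Matrix (Fin k) (Fin k) ℝ} (hP : P.PosDef) (d q : Fin k → ℝ) :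
    (d ⬝ᵥ (P *ᵥ q))^2 ≤ wq P d * wq P q := by
  have hPt : Pᵀ = P := by
    ext i j
    have := congr_fun (congr_fun hP.1 i) j
    simpa [Matrix.conjTranspose_apply] using this
  have hnn : ∀ v, 0 ≤ wq P v := fun v => by
    simpa [wq] using hP.posSemidef.dotProduct_mulVec_nonneg v
  have hvm : q ᵥ* P = P *ᵥ q := by rw [← Matrix.vecMul_transpose, hPt]
  have hsymm : q ⬝ᵥ (P *ᵥ d) = d ⬝ᵥ (P *ᵥ q) := by
    rw [Matrix.dotProduct_mulVec, hvm, dotProduct_comm]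
  by_cases hq : wq P q = 0
  · have hq0 : q = 0 := by
      by_contra h
      exact absurd hq (ne_of_gt (by simpa [wq] using hP.dotProduct_mulVec_pos h))
    simp [hq0, wq, Matrix.mulVec_zero, dotProduct_zero]
  · have hqpos : 0 < wq P q := lt_of_le_of_ne (hnn q) (Ne.symm hq)
    have expand := hnn (wq P q • d - (d ⬝ᵥ (P *ᵥ q)) • q)
    simp only [wq, Matrix.mulVec_sub, Matrix.mulVec_smul, sub_dotProduct,
      smul_dotProduct, dotProduct_sub, dotProduct_smul, smul_eq_mul] at expand
    rw [hsymm] at expand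
    simp only [wq] at hqpos ⊢
    nlinarith [expand, hqpos]

lemma contract_aux {a b s c ρ : ℝ} (ha : 0 ≤ a) (hb : 0 ≤ b) (hρ : 0 < ρ)
    (hc : c * ρ = 1) (h1 : ρ * a ≤ s) (hcs : s^2 ≤ a * b) : a ≤ c^2 * b := by
  rcases eq_or_lt_of_le ha with h0 | h0
  · nlinarith [sq_nonneg c]
  · have hsq : (ρ * a) * (ρ * a) ≤ s * s :=
      mul_self_le_mul_self (by positivity) h1
    have h2 : ρ^2 * a ≤ b := by nlinarith
    have hcρ : c^2 * ρ^2 = 1 := by nlinarith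
    nlinarith [mul_le_mul_of_nonneg_left h2 (sq_nonneg c)]

lemma mvt_dot {k : ℕ} (G : (Fin k → ℝ) → (Fin k → ℝ))
    (Hs : (Fin k → ℝ) → Matrix (Fin k) (Fin k) ℝ)
    (hhess : ∀ θv, HasFDerivAt G (LinearMap.toContinuousLinearMap (Hs θv).mulVecLin) θv)
    (α : ℝ) (hcurv : ∀ θv, (-(Hs θv) - α • (1 : Matrix (Fin k) (Fin k) ℝ)).PosSemidef)
    (u u' : Fin k → ℝ) :
    (u - u') ⬝ᵥ (G u - G u') ≤ -α * ((u - u') ⬝ᵥ (u - u')) := by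
  set d := u - u' with hd
  set g : ℝ → ℝ := fun s => d ⬝ᵥ G (u' + s • d) with hg
  have hpath : ∀ s : ℝ, HasDerivAt (fun s : ℝ => u' + s • d) d s := fun s => by
    simpa using ((hasDerivAt_id s).smul_const d).const_add u'
  have hG : ∀ s : ℝ, HasDerivAt (fun s : ℝ => G (u' + s • d)) ((Hs (u' + s • d)) *ᵥ d) s :=
    fun s => by have := (hhess (u' + s • d)).comp_hasDerivAt s (hpath s); exact this
  have hg' : ∀ s : ℝ, HasDerivAt g (d ⬝ᵥ ((Hs (u' + s • d)) *ᵥ d)) s := by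
    intro s
    have hco : ∀ i, HasDerivAt (fun s : ℝ => G (u' + s • d) i) (((Hs (u' + s • d)) *ᵥ d) i) s :=
      fun i => hasDerivAt_pi.1 (hG s) i
    have hsum := HasDerivAt.fun_sum (u := Finset.univ) (fun i _ => ((hco i).const_mul (d i)))
    simpa [g, dotProduct] using hsum
  have hcont : Continuous g := continuous_iff_continuousAt.2 fun s => (hg' s).continuousAt
  obtain ⟨c, _, hceq⟩ := exists_hasDerivAt_eq_slope g
    (fun s => d ⬝ᵥ ((Hs (u' + s • d)) *ᵥ d)) zero_lt_one hcont.continuousOn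
    (fun x _ => hg' x)
  have hg1 : g 1 = d ⬝ᵥ G u := by
    have : u' + (1:ℝ) • d = u := by rw [one_smul, hd]; abel
    rw [hg]; simp only []; rw [this]
  have hg0 : g 0 = d ⬝ᵥ G u' := by
    have : u' + (0:ℝ) • d = u' := by rw [zero_smul, add_zero]
    rw [hg]; simp only []; rw [this]
  have hcurve := (hcurv (u' + c • d)).dotProduct_mulVec_nonneg d
  simp only [Matrix.sub_mulVec, Matrix.neg_mulVec, Matrix.smul_mulVec, Matrix.one_mulVec,
    dotProduct_sub, dotProduct_neg, dotProduct_smul, smul_eq_mul,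
    star_trivial] at hcurve
  have hslope : d ⬝ᵥ ((Hs (u' + c • d)) *ᵥ d) = g 1 - g 0 := by
    rw [hceq]; norm_num
  rw [dotProduct_sub, ← hg1, ← hg0]
  linarith [hslope ▸ hcurve]


open Filter

set_option maxHeartbeats 1000000 in
theorem isd_filter_invertibility {k : ℕ}
    (P Φ : Matrix (Fin k) (Fin k) ℝ) (hP : P.PosDef) (ω : Fin k → ℝ)
    (α : ℝ) (hpen : max (-α) 0 < lMin P)
    (ℓ : ℕ → (Fin k → ℝ) → ℝ)
    (G : ℕ → (Fin k → ℝ) → (Fin k → ℝ))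
    (Hs : ℕ → (Fin k → ℝ) → Matrix (Fin k) (Fin k) ℝ)
    (hgrad : ∀ t θv, HasFDerivAt (ℓ t)
      (∑ i, G t θv i • (ContinuousLinearMap.proj i : (Fin k → ℝ) →L[ℝ] ℝ)) θv)
    (hhess : ∀ t θv, HasFDerivAt (G t)
      (LinearMap.toContinuousLinearMap (Hs t θv).mulVecLin) θv)
    (hHscont : ∀ t, Continuous (Hs t))
    (hHssymm : ∀ t θv, (Hs t θv).IsHermitian)
    (hcurv : ∀ t θv, (-(Hs t θv) - α • (1 : Matrix (Fin k) (Fin k) ℝ)).PosSemidef)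
    (θ θ' : ℕ → (Fin k → ℝ))
    (hrec : ∀ t : ℕ,
      θ (t + 1) = ((1 - Φ) *ᵥ ω + Φ *ᵥ θ t) + P⁻¹ *ᵥ G (t + 1) (θ (t + 1)))
    (hrec' : ∀ t : ℕ,
      θ' (t + 1) = ((1 - Φ) *ᵥ ω + Φ *ᵥ θ' t) + P⁻¹ *ᵥ G (t + 1) (θ' (t + 1)))
    (τ : ℝ)
    (hτ : τ =
      (1 - max (lMin (P - Φᵀ * P * Φ)) 0 / lMax P
         + max (-lMin (P - Φᵀ * P * Φ)) 0 / lMin P)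
      * (1 - max α 0 / (lMax P + max α 0)
           + max (-α) 0 / (lMin P - max (-α) 0)) ^ 2) :
    (∀ t : ℕ, wq P (θ t - θ' t) ≤ τ ^ t * wq P (θ 0 - θ' 0)) ∧
      (τ < 1 → Tendsto (fun t => ‖θ t - θ' t‖) atTop (nhds 0)) := by
  rcases isEmpty_or_nonempty (Fin k) with hk | hk
  · have h0 : ∀ v : Fin k → ℝ, wq P v = 0 := fun v => by simp [wq, dotProduct]
    constructor
    · intro t; rw [h0, h0, mul_zero]
    · intro _
      have hz : ∀ t, ‖θ t - θ' t‖ = 0 := fun t => by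
        have : θ t - θ' t = 0 := funext fun i => hk.elim i
        rw [this, norm_zero]
      rw [show (fun t => ‖θ t - θ' t‖) = fun _ => (0:ℝ) from funext hz]
      exact tendsto_const_nhds
  -- main case
  have hPH := hP.1
  have hnn : ∀ v, 0 ≤ wq P v := fun v => by simpa [wq] using hP.posSemidef.dotProduct_mulVec_nonneg v
  have hlm : 0 < lMin P := lt_of_le_of_lt (le_max_right _ _) hpen
  have hlM : 0 < lMax P := lt_of_lt_of_le hlm (lMin_le_lMax hPH)
  have hPt : Pᵀ = P := by
    ext i j
    have := congr_fun (congr_fun hP.1 i) j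
    simpa [Matrix.conjTranspose_apply] using this
  have hq1 : (P - Φᵀ * P * Φ).IsHermitian := by
    refine hPH.sub ?_
    show (Φᵀ * P * Φ)ᴴ = Φᵀ * P * Φ
    rw [Matrix.conjTranspose_mul, Matrix.conjTranspose_mul, hPH,
      Matrix.conjTranspose_eq_transpose_of_trivial, Matrix.conjTranspose_eq_transpose_of_trivial,
      Matrix.transpose_transpose, Matrix.mul_assoc]
  set lm := lMin P with hlmdef
  set lM := lMax P with hlMdef
  set γ := lMin (P - Φᵀ * P * Φ) with hγdef
  set c1 := 1 - max γ 0 / lM + max (-γ) 0 / lm with hc1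
  set c2 := 1 - max α 0 / (lM + max α 0) + max (-α) 0 / (lm - max (-α) 0) with hc2
  have hτc : τ = c1 * c2^2 := hτ
  have hdotnn : ∀ x : Fin k → ℝ, 0 ≤ x ⬝ᵥ x := fun x =>
    Finset.sum_nonneg fun i _ => mul_self_nonneg _
  -- identity: x ⬝ (ΦᵀPΦ x) = wq P (Φ x)
  have hid : ∀ x : Fin k → ℝ, x ⬝ᵥ ((Φᵀ * P * Φ) *ᵥ x) = wq P (Φ *ᵥ x) := by
    intro x
    rw [wq, ← Matrix.mulVec_mulVec, ← Matrix.mulVec_mulVec, Matrix.dotProduct_mulVec,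
      Matrix.vecMul_transpose]
  have hsub : ∀ x : Fin k → ℝ, x ⬝ᵥ ((P - Φᵀ * P * Φ) *ᵥ x) = wq P x - wq P (Φ *ᵥ x) := by
    intro x
    rw [Matrix.sub_mulVec, dotProduct_sub, hid x]; rfl
  -- prediction bound
  have hpred : ∀ x : Fin k → ℝ, wq P (Φ *ᵥ x) ≤ c1 * wq P x := by
    intro x
    have hlow : γ * (x ⬝ᵥ x) ≤ x ⬝ᵥ ((P - Φᵀ * P * Φ) *ᵥ x) := lMin_le_wq hq1 x
    rw [hsub x] at hlow
    have hup : wq P x ≤ lM * (x ⬝ᵥ x) := wq_le_lMax hPH x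
    have hlo : lm * (x ⬝ᵥ x) ≤ wq P x := lMin_le_wq hPH x
    have hxx := hdotnn x
    rcases le_or_gt 0 γ with hγ | hγ
    · rw [hc1, max_eq_left hγ, max_eq_right (neg_nonpos.mpr hγ), zero_div, add_zero]
      have goal' : γ * wq P x / lM ≤ wq P x - wq P (Φ *ᵥ x) := by
        rw [div_le_iff₀ hlM]
        nlinarith [mul_le_mul_of_nonneg_right hlow hlM.le, mul_le_mul_of_nonneg_left hup hγ]
      rw [show (1 - γ / lM) * wq P x = wq P x - γ * wq P x / lM from by ring]
      linarith [goal']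
    · rw [hc1, max_eq_right hγ.le, max_eq_left (by linarith : (0:ℝ) ≤ -γ), zero_div, sub_zero]
      have goal' : γ * wq P x / lm ≤ wq P x - wq P (Φ *ᵥ x) := by
        rw [div_le_iff₀ hlm]
        nlinarith [mul_le_mul_of_nonneg_right hlow hlm.le, mul_le_mul_of_nonpos_left hlo hγ.le]
      rw [show (1 + -γ / lm) * wq P x = wq P x - γ * wq P x / lm from by ring]
      linarith [goal']
  -- c1 nonneg
  have hγlelM : γ ≤ lM := by
    obtain ⟨i0⟩ := hk
    set x : Fin k → ℝ := Pi.single i0 1 with hx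
    have hxx : x ⬝ᵥ x = 1 := by simp [hx, dotProduct, Pi.single_apply]
    have h1 : γ * (x ⬝ᵥ x) ≤ x ⬝ᵥ ((P - Φᵀ * P * Φ) *ᵥ x) := lMin_le_wq hq1 x
    rw [hsub x, hxx, mul_one] at h1
    have h2 : wq P x ≤ lM * (x ⬝ᵥ x) := wq_le_lMax hPH x
    rw [hxx, mul_one] at h2
    have h3 := hnn (Φ *ᵥ x)
    linarith
  have hc1nn : 0 ≤ c1 := by
    rcases le_or_gt 0 γ with hγ | hγ
    · rw [hc1, max_eq_left hγ, max_eq_right (neg_nonpos.mpr hγ), zero_div, add_zero,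
        sub_nonneg]
      exact div_le_one_of_le₀ hγlelM hlM.le
    · rw [hc1, max_eq_right hγ.le, max_eq_left (by linarith : (0:ℝ) ≤ -γ), zero_div, sub_zero]
      have : (0:ℝ) ≤ -γ / lm := div_nonneg (by linarith) hlm.le
      linarith
  -- update bound
  have hlm0 : lm ≠ 0 := ne_of_gt hlm
  have hlM0 : lM ≠ 0 := ne_of_gt hlM
  have hPinv : ∀ v, P *ᵥ (P⁻¹ *ᵥ v) = v := fun v => by
    rw [Matrix.mulVec_mulVec, Matrix.mul_nonsing_inv _ (isUnit_iff_ne_zero.mpr hP.det_pos.ne'),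
      Matrix.one_mulVec]
  have hupd : ∀ t : ℕ, wq P (θ (t+1) - θ' (t+1)) ≤ c2^2 * wq P (Φ *ᵥ (θ t - θ' t)) := by
    intro t
    have e1 : P *ᵥ θ (t+1) = (P *ᵥ ((1 - Φ) *ᵥ ω) + P *ᵥ (Φ *ᵥ θ t)) + G (t+1) (θ (t+1)) := by
      conv_lhs => rw [hrec t]
      rw [Matrix.mulVec_add, Matrix.mulVec_add, hPinv]
    have e2 : P *ᵥ θ' (t+1) = (P *ᵥ ((1 - Φ) *ᵥ ω) + P *ᵥ (Φ *ᵥ θ' t)) + G (t+1) (θ' (t+1)) := by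
      conv_lhs => rw [hrec' t]
      rw [Matrix.mulVec_add, Matrix.mulVec_add, hPinv]
    set d : Fin k → ℝ := θ (t+1) - θ' (t+1) with hd
    set q : Fin k → ℝ := Φ *ᵥ (θ t - θ' t) with hq
    have key : P *ᵥ d = P *ᵥ q + (G (t+1) (θ (t+1)) - G (t+1) (θ' (t+1))) := by
      rw [hd, hq, Matrix.mulVec_sub, e1, e2, Matrix.mulVec_sub, Matrix.mulVec_sub]
      abel
    have hmvt := mvt_dot (G (t+1)) (Hs (t+1)) (hhess (t+1)) α (hcurv (t+1))
      (θ (t+1)) (θ' (t+1))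
    rw [← hd] at hmvt
    have hdot : d ⬝ᵥ (P *ᵥ q) = wq P d - d ⬝ᵥ (G (t+1) (θ (t+1)) - G (t+1) (θ' (t+1))) := by
      have h := congrArg (fun v => d ⬝ᵥ v) key
      simp only [dotProduct_add] at h
      rw [wq]
      linarith [h]
    have h3 : wq P d + α * (d ⬝ᵥ d) ≤ d ⬝ᵥ (P *ᵥ q) := by
      rw [hdot]; linarith [hmvt]
    have hcs := my_cs hP d q
    have hup : wq P d ≤ lM * (d ⬝ᵥ d) := wq_le_lMax hPH d
    have hlo : lm * (d ⬝ᵥ d) ≤ wq P d := lMin_le_wq hPH d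
    have hdd := hdotnn d
    rcases le_or_gt 0 α with hα | hα
    · have e3 : max α 0 = α := max_eq_left hα
      have e4 : max (-α) 0 = 0 := max_eq_right (neg_nonpos.mpr hα)
      have hρpos : (0:ℝ) < (lM + α) / lM := div_pos (by linarith) hlM
      have hc2ρ : c2 * ((lM + α) / lM) = 1 := by
        rw [hc2, e3, e4, zero_div, add_zero]
        field_simp [hlm0, hlM0]; ring
      have hρd : (lM + α) / lM * wq P d ≤ d ⬝ᵥ (P *ᵥ q) := by
        refine le_trans ?_ h3
        rw [show (lM + α) / lM * wq P d = wq P d + α * wq P d / lM from by field_simp [hlm0, hlM0]]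
        have h5 : α * wq P d / lM ≤ α * (d ⬝ᵥ d) := by
          rw [div_le_iff₀ hlM]
          nlinarith [mul_le_mul_of_nonneg_left hup hα]
        linarith
      exact contract_aux (hnn d) (hnn q) hρpos hc2ρ hρd hcs
    · have e3 : max α 0 = 0 := max_eq_right hα.le
      have e4 : max (-α) 0 = -α := max_eq_left (by linarith)
      have hlmα : 0 < lm + α := by
        have := hpen; rw [e4] at this; linarith
      have hρpos : (0:ℝ) < (lm + α) / lm := div_pos hlmα hlm
      have hc2ρ : c2 * ((lm + α) / lm) = 1 := by
        rw [hc2, e3, e4, zero_div, sub_zero, show lm - -α = lm + α from by ring]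
        field_simp [hlm0, hlM0]; ring
      have hρd : (lm + α) / lm * wq P d ≤ d ⬝ᵥ (P *ᵥ q) := by
        refine le_trans ?_ h3
        rw [show (lm + α) / lm * wq P d = wq P d + α * wq P d / lm from by field_simp [hlm0, hlM0]]
        have h5 : α * wq P d / lm ≤ α * (d ⬝ᵥ d) := by
          rw [div_le_iff₀ hlm]
          nlinarith [mul_le_mul_of_nonpos_left hlo hα.le]
        linarith
      exact contract_aux (hnn d) (hnn q) hρpos hc2ρ hρd hcs
  -- one step
  have hτnn : 0 ≤ τ := by
    rw [hτc]; exact mul_nonneg hc1nn (sq_nonneg c2)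
  have hstep : ∀ t : ℕ, wq P (θ (t+1) - θ' (t+1)) ≤ τ * wq P (θ t - θ' t) := by
    intro t
    calc wq P (θ (t+1) - θ' (t+1)) ≤ c2^2 * wq P (Φ *ᵥ (θ t - θ' t)) := hupd t
      _ ≤ c2^2 * (c1 * wq P (θ t - θ' t)) :=
          mul_le_mul_of_nonneg_left (hpred _) (sq_nonneg c2)
      _ = τ * wq P (θ t - θ' t) := by rw [hτc]; ring
  have hmain : ∀ t : ℕ, wq P (θ t - θ' t) ≤ τ ^ t * wq P (θ 0 - θ' 0) := by
    intro t
    induction t with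
    | zero => simp
    | succ n ih =>
      calc wq P (θ (n+1) - θ' (n+1)) ≤ τ * wq P (θ n - θ' n) := hstep n
        _ ≤ τ * (τ ^ n * wq P (θ 0 - θ' 0)) := mul_le_mul_of_nonneg_left ih hτnn
        _ = τ ^ (n+1) * wq P (θ 0 - θ' 0) := by ring
  refine ⟨hmain, ?_⟩
  intro hτ1
  set C := wq P (θ 0 - θ' 0) / lm with hC
  have hbound : ∀ t : ℕ, ‖θ t - θ' t‖ ≤ Real.sqrt (τ ^ t * C) := by
    intro t
    rw [pi_norm_le_iff_of_nonneg (Real.sqrt_nonneg _)]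
    intro i
    set x : Fin k → ℝ := θ t - θ' t with hx
    have h1 : (x i)^2 ≤ x ⬝ᵥ x := by
      rw [pow_two]
      exact Finset.single_le_sum (f := fun j => x j * x j)
        (fun j _ => mul_self_nonneg _) (Finset.mem_univ i)
    have h2 : lm * (x ⬝ᵥ x) ≤ wq P x := lMin_le_wq hPH x
    have h3 : wq P x ≤ τ ^ t * wq P (θ 0 - θ' 0) := hmain t
    have h4 : (x i)^2 ≤ τ ^ t * C := by
      rw [hC, show τ ^ t * (wq P (θ 0 - θ' 0) / lm) = τ ^ t * wq P (θ 0 - θ' 0) / lm from by ring, le_div_iff₀ hlm]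
      nlinarith [h1, h2, h3, hdotnn x]
    calc ‖x i‖ = Real.sqrt ((x i)^2) := by
          rw [Real.sqrt_sq_eq_abs, Real.norm_eq_abs]
      _ ≤ Real.sqrt (τ ^ t * C) := Real.sqrt_le_sqrt h4
  have hlim : Tendsto (fun t : ℕ => Real.sqrt (τ ^ t * C)) atTop (nhds 0) := by
    have h0 : Tendsto (fun t : ℕ => τ ^ t * C) atTop (nhds 0) := by
      simpa using (tendsto_pow_atTop_nhds_zero_of_lt_one hτnn hτ1).mul_const C
    have := (Real.continuous_sqrt.tendsto 0).comp h0
    simpa [Function.comp_def] using this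
  exact squeeze_zero (fun t => norm_nonneg _) hbound hlim
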